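/- For every real number t, the following identity of real numbers holds: γ + log(π/4) = log( cosh(π·t) / (1 + 4·t²) ) − ∑_{k=1}^{∞} [ −1/k + log(1 + 1/k + 1/(4k²) + t²/k²) ], where the series on the right converges. -/

import Mathlib

open Filter Finset Topology

noncomputable def zz (t : ℝ) : ℂ := (1/2 : ℂ) + t * Complex.I

lemma zz_normSq (t : ℝ) : Complex.normSq (zz t) = 1/4 + t^2 := by
  have h : zz t = ((1/2 : ℝ) : ℂ) + (t : ℂ) * Complex.I := by push_cast [zz]; ring
  rw [h, Complex.normSq_add_mul_I]; norm_num

lemma zz_ne_neg_nat (t : ℝ) : ∀ m : ℕ, zz t ≠ -m := by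
  intro m h
  have h2 := congrArg Complex.re h
  simp [zz] at h2
  have : (0:ℝ) ≤ (m:ℝ) := m.cast_nonneg
  linarith

lemma zz_gamma_ne (t : ℝ) : Complex.Gamma (zz t) ≠ 0 :=
  Complex.Gamma_ne_zero (zz_ne_neg_nat t)

lemma normSq_Gamma (t : ℝ) :
    Complex.normSq (Complex.Gamma (zz t)) = Real.pi / Real.cosh (Real.pi * t) := by
  have h1 := Complex.Gamma_mul_Gamma_one_sub (zz t)
  have h2 : (1:ℂ) - zz t = (starRingEnd ℂ) (zz t) := by
    simp [zz, Complex.ext_iff]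
    norm_num
  have h3 : Complex.sin (Real.pi * zz t) = (Real.cosh (Real.pi * t) : ℂ) := by
    have : (Real.pi : ℂ) * zz t = (Real.pi/2 : ℝ) + ((Real.pi * t : ℝ) : ℂ) * Complex.I := by
      push_cast [zz]; ring
    rw [this, Complex.sin_add]
    push_cast
    rw [Complex.sin_pi_div_two, Complex.cos_pi_div_two, Complex.cos_mul_I]
    rw [← Complex.ofReal_mul, ← Complex.ofReal_cosh]
    ring
  rw [h2, Complex.Gamma_conj, Complex.mul_conj, h3] at h1
  rw [show (Real.pi:ℂ)/(Real.cosh (Real.pi*t):ℂ) = ((Real.pi / Real.cosh (Real.pi*t) : ℝ):ℂ) by push_cast; ring] at h1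
  exact_mod_cast h1

lemma zz_ne_zero (t : ℝ) : zz t ≠ 0 := by
  intro h
  have := congrArg Complex.re h
  simp [zz] at this

lemma zz_re (t : ℝ) : (zz t).re = 1/2 := by simp [zz]

lemma term_eq (t : ℝ) (j : ℕ) :
    Complex.normSq (1 + zz t / ((j:ℂ)+1)) =
      1 + 1 / ((j : ℝ) + 1) + 1 / (4 * ((j : ℝ) + 1) ^ 2) + t ^ 2 / ((j : ℝ) + 1) ^ 2 := by
  have hk : ((j:ℝ)+1) ≠ 0 := by positivity
  have hk' : ((j:ℂ)+1) ≠ 0 := by exact_mod_cast Nat.succ_ne_zero j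
  have h : 1 + zz t / ((j:ℂ)+1)
      = ((1 + 1/(2*((j:ℝ)+1)) : ℝ) : ℂ) + ((t/((j:ℝ)+1) : ℝ) : ℂ) * Complex.I := by
    push_cast [zz]
    field_simp
    ring
  rw [h, Complex.normSq_add_mul_I]
  field_simp
  ring

lemma term_pos (t : ℝ) (j : ℕ) :
    0 < 1 + 1 / ((j : ℝ) + 1) + 1 / (4 * ((j : ℝ) + 1) ^ 2) + t ^ 2 / ((j : ℝ) + 1) ^ 2 := by
  have hk : (0:ℝ) < ((j:ℝ)+1) := by positivity
  positivity

lemma term_ne_zero (t : ℝ) (j : ℕ) : (1 + zz t / ((j:ℂ)+1)) ≠ 0 := by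
  rw [← Complex.normSq_pos, term_eq]
  exact term_pos t j

lemma gammaSeq_ne_zero (t : ℝ) (n : ℕ) (hn : 1 ≤ n) :
    Complex.GammaSeq (zz t) n ≠ 0 := by
  rw [Complex.GammaSeq]
  apply div_ne_zero
  · apply mul_ne_zero
    · rw [Complex.cpow_def_of_ne_zero (Nat.cast_ne_zero.mpr (by omega) : (n:ℂ) ≠ 0)]
      exact Complex.exp_ne_zero _
    · exact_mod_cast Nat.factorial_ne_zero n
  · exact Finset.prod_ne_zero_iff.mpr fun j _ => by
      intro h
      exact zz_ne_neg_nat t j (by linear_combination h)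

lemma prod_eq (t : ℝ) (n : ℕ) (hn : 1 ≤ n) :
    (∏ j ∈ Finset.range n, (1 + zz t / ((j:ℂ)+1)))
      = (n:ℂ) ^ (zz t) / (zz t * Complex.GammaSeq (zz t) n) := by
  have hfac : (∏ j ∈ Finset.range (n+1), (zz t + j))
      = zz t * ((n.factorial : ℂ) * ∏ j ∈ Finset.range n, (1 + zz t/((j:ℂ)+1))) := by
    rw [Finset.prod_range_succ']
    have h1 : ∀ j ∈ Finset.range n, (zz t + ((j:ℕ)+1 : ℕ))
        = ((j:ℂ)+1) * (1 + zz t/((j:ℂ)+1)) := by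
      intro j _
      have hk' : ((j:ℂ)+1) ≠ 0 := by exact_mod_cast Nat.succ_ne_zero j
      push_cast
      field_simp
      ring
    rw [Finset.prod_congr rfl h1, Finset.prod_mul_distrib]
    have h2 : (∏ j ∈ Finset.range n, ((j:ℂ)+1)) = (n.factorial : ℂ) := by
      rw [← Finset.prod_range_add_one_eq_factorial n]
      push_cast
      rfl
    rw [h2]
    push_cast
    ring
  have hG : Complex.GammaSeq (zz t) n
      = (n:ℂ) ^ (zz t) * n.factorial / (zz t * ((n.factorial : ℂ) * ∏ j ∈ Finset.range n, (1 + zz t/((j:ℂ)+1)))) := by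
    rw [Complex.GammaSeq, hfac]
  rw [hG]
  have hP : (∏ j ∈ Finset.range n, (1 + zz t/((j:ℂ)+1))) ≠ 0 :=
    Finset.prod_ne_zero_iff.mpr fun j _ => term_ne_zero t j
  have hfacne : (n.factorial : ℂ) ≠ 0 := by exact_mod_cast Nat.factorial_ne_zero n
  have hz := zz_ne_zero t
  have hpow : (n:ℂ) ^ (zz t) ≠ 0 := by
    rw [Complex.cpow_def_of_ne_zero (Nat.cast_ne_zero.mpr (by omega))]
    exact Complex.exp_ne_zero _
  field_simp

noncomputable def ff (t : ℝ) (k : ℕ) : ℝ :=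
  -1 / ((k : ℝ) + 1) +
    Real.log (1 + 1 / ((k : ℝ) + 1) + 1 / (4 * ((k : ℝ) + 1) ^ 2) +
      t ^ 2 / ((k : ℝ) + 1) ^ 2)

lemma key (t : ℝ) (n : ℕ) (hn : 1 ≤ n) :
    ∑ j ∈ Finset.range n, ff t j
      = -((harmonic n : ℝ) - Real.log n) - Real.log (Complex.normSq (zz t))
        - Real.log (Complex.normSq (Complex.GammaSeq (zz t) n)) := by
  have h1 : ∑ j ∈ Finset.range n, ff t j
      = (∑ j ∈ Finset.range n, (-1 / ((j:ℝ)+1)))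
        + ∑ j ∈ Finset.range n, Real.log (Complex.normSq (1 + zz t / ((j:ℂ)+1))) := by
    rw [← Finset.sum_add_distrib]
    refine Finset.sum_congr rfl fun j _ => ?_
    rw [term_eq, ff]
  rw [h1]
  have h2 : (∑ j ∈ Finset.range n, (-1 / ((j:ℝ)+1))) = -(harmonic n : ℝ) := by
    have hh : (harmonic n : ℝ) = ∑ j ∈ Finset.range n, (((j:ℝ)+1))⁻¹ := by
      push_cast [harmonic]
      rfl
    rw [hh, ← Finset.sum_neg_distrib]
    exact Finset.sum_congr rfl fun j _ => by rw [neg_div, one_div]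
  rw [h2]
  have h3 : ∑ j ∈ Finset.range n, Real.log (Complex.normSq (1 + zz t / ((j:ℂ)+1)))
      = Real.log (Complex.normSq (∏ j ∈ Finset.range n, (1 + zz t / ((j:ℂ)+1)))) := by
    rw [map_prod Complex.normSq (fun j : ℕ => 1 + zz t/((j:ℂ)+1)) (Finset.range n),
      Real.log_prod (fun j _ => (Complex.normSq_pos.mpr (term_ne_zero t j)).ne')]
  rw [h3, prod_eq t n hn, map_div₀, map_mul]
  have hpown : Complex.normSq ((n:ℂ) ^ zz t) = n := by
    rw [← Complex.sq_norm]
    have h5 : ((n:ℕ):ℂ) = (((n:ℝ)):ℂ) := by push_cast; rfl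
    have hnpos : (0:ℝ) < n := by exact_mod_cast hn
    rw [h5, Complex.norm_cpow_eq_rpow_re_of_pos hnpos, zz_re,
      ← Real.rpow_natCast ((n:ℝ) ^ ((1:ℝ)/2)) 2, ← Real.rpow_mul (Nat.cast_nonneg n)]
    norm_num
  rw [hpown]
  have hnsz : Complex.normSq (zz t) ≠ 0 := (Complex.normSq_pos.mpr (zz_ne_zero t)).ne'
  have hnsG : Complex.normSq (Complex.GammaSeq (zz t) n) ≠ 0 :=
    (Complex.normSq_pos.mpr (gammaSeq_ne_zero t n hn)).ne'
  have hnne : ((n:ℝ)) ≠ 0 := by positivity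
  rw [Real.log_div hnne (mul_ne_zero hnsz hnsG), Real.log_mul hnsz hnsG]
  ring

lemma tendsto_sum_ff (t : ℝ) :
    Filter.Tendsto (fun n => ∑ j ∈ Finset.range n, ff t j) atTop
      (𝓝 (-(Real.eulerMascheroniConstant) - Real.log (Complex.normSq (zz t))
          - Real.log (Complex.normSq (Complex.Gamma (zz t))))) := by
  have hA : Filter.Tendsto (fun n : ℕ => -((harmonic n : ℝ) - Real.log n)
      - Real.log (Complex.normSq (zz t))
      - Real.log (Complex.normSq (Complex.GammaSeq (zz t) n))) atTop
      (𝓝 (-(Real.eulerMascheroniConstant) - Real.log (Complex.normSq (zz t))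
          - Real.log (Complex.normSq (Complex.Gamma (zz t))))) := by
    refine Filter.Tendsto.sub (Filter.Tendsto.sub ?_ tendsto_const_nhds) ?_
    · exact Real.tendsto_harmonic_sub_log.neg
    · exact ((Complex.continuous_normSq.tendsto _).comp
        (Complex.GammaSeq_tendsto_Gamma (zz t))).log
        ((Complex.normSq_pos.mpr (zz_gamma_ne t)).ne')
  refine hA.congr' ?_
  filter_upwards [eventually_ge_atTop 1] with n hn
  exact (key t n hn).symm

lemma aux_bound (t k : ℝ) (hk1 : 1 ≤ k) :
    |(-1/k + Real.log (1 + 1/k + 1/(4*k^2) + t^2/k^2))|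
      ≤ ((2 + t^2)^2 + 1/4 + t^2) * (1/k^2) := by
  have hk0 : (0:ℝ) < k := by linarith
  set a : ℝ := 1/k + 1/(4*k^2) + t^2/k^2 with ha
  clear_value a
  have ha0 : 0 ≤ a := by rw [ha]; positivity
  have h1a : (0:ℝ) < 1 + a := by linarith
  have harg : 1 + 1/k + 1/(4*k^2) + t^2/k^2 = 1 + a := by rw [ha]; ring
  rw [harg]
  have hup : Real.log (1+a) ≤ a := by
    have := Real.log_le_sub_one_of_pos h1a; linarith
  have hlow : a - a^2 ≤ Real.log (1+a) := by
    have h := Real.one_sub_inv_le_log_of_pos h1a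
    have he : 1 - (1+a)⁻¹ = a/(1+a) := by field_simp; ring
    have h2 : a - a^2 ≤ a/(1+a) := by
      rw [le_div_iff₀ h1a]
      nlinarith [pow_nonneg ha0 3]
    linarith
  have h1k : 1/k^2 ≤ 1/k := by
    apply one_div_le_one_div_of_le hk0
    nlinarith
  have hale : a ≤ (2+t^2) * (1/k) := by
    have e : a = 1/k + (1/4)*(1/k^2) + t^2*(1/k^2) := by rw [ha]; ring
    have ht2 : (0:ℝ) ≤ t^2 := sq_nonneg t
    have h1 : t^2*(1/k^2) ≤ t^2*(1/k) := mul_le_mul_of_nonneg_left h1k ht2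
    have h3 : (0:ℝ) < 1/k := by positivity
    nlinarith
  have ha2 : a^2 ≤ (2+t^2)^2 * (1/k^2) := by
    calc a^2 = a*a := sq a
    _ ≤ ((2+t^2)*(1/k))*((2+t^2)*(1/k)) := mul_self_le_mul_self ha0 hale
    _ = (2+t^2)^2 * (1/k^2) := by ring
  have hd : a - 1/k = (1/4)*(1/k^2) + t^2*(1/k^2) := by rw [ha]; ring
  have hk2 : (0:ℝ) ≤ 1/k^2 := by positivity
  have hm1 : (0:ℝ) ≤ t^2*(1/k^2) := mul_nonneg (sq_nonneg t) hk2
  have hm2 : (0:ℝ) ≤ (2+t^2)^2*(1/k^2) := mul_nonneg (sq_nonneg (2+t^2)) hk2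
  have hC : ((2+t^2)^2 + 1/4 + t^2) * (1/k^2)
      = (2+t^2)^2*(1/k^2) + (1/4)*(1/k^2) + t^2*(1/k^2) := by ring
  rw [abs_le, hC, neg_div]
  constructor
  · linarith
  · linarith

lemma ff_bound (t : ℝ) (j : ℕ) :
    |ff t j| ≤ ((2 + t^2)^2 + 1/4 + t^2) * (1/((j:ℝ)+1)^2) :=
  aux_bound t ((j:ℝ)+1) (le_add_of_nonneg_left (Nat.cast_nonneg j))

lemma summable_ff (t : ℝ) : Summable (ff t) := by
  have hs0 : Summable (fun j : ℕ => 1/((j:ℝ)+1)^2) := by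
    have h := Real.summable_one_div_nat_pow.mpr (by norm_num : 1 < 2)
    have h2 := (_root_.summable_nat_add_iff 1).mpr h
    refine h2.congr fun j => ?_
    push_cast
    ring
  have hs : Summable (fun j : ℕ => ((2 + t^2)^2 + 1/4 + t^2) * (1/((j:ℝ)+1)^2)) :=
    hs0.mul_left _
  refine Summable.of_abs (Summable.of_nonneg_of_le (fun j => abs_nonneg _)
    (fun j => ff_bound t j) hs)

theorem real_part_identity (t : ℝ) :
    Summable (fun k : ℕ =>
      -1 / ((k : ℝ) + 1) +
        Real.log (1 + 1 / ((k : ℝ) + 1) + 1 / (4 * ((k : ℝ) + 1) ^ 2) +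
          t ^ 2 / ((k : ℝ) + 1) ^ 2)) ∧
    Real.eulerMascheroniConstant + Real.log (Real.pi / 4) =
      Real.log (Real.cosh (Real.pi * t) / (1 + 4 * t ^ 2)) -
        ∑' k : ℕ,
          (-1 / ((k : ℝ) + 1) +
            Real.log (1 + 1 / ((k : ℝ) + 1) + 1 / (4 * ((k : ℝ) + 1) ^ 2) +
              t ^ 2 / ((k : ℝ) + 1) ^ 2)) := by
  have hsum : Summable (ff t) := summable_ff t
  refine ⟨hsum, ?_⟩
  have htsum : ∑' k, ff t k
      = -(Real.eulerMascheroniConstant) - Real.log (Complex.normSq (zz t))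
        - Real.log (Complex.normSq (Complex.Gamma (zz t))) :=
    tendsto_nhds_unique (hsum.hasSum.tendsto_sum_nat) (tendsto_sum_ff t)
  show Real.eulerMascheroniConstant + Real.log (Real.pi / 4)
      = Real.log (Real.cosh (Real.pi * t) / (1 + 4 * t ^ 2)) - ∑' k, ff t k
  rw [htsum, zz_normSq, normSq_Gamma]
  have hcosh : (0:ℝ) < Real.cosh (Real.pi * t) := Real.cosh_pos _
  have hpi : (0:ℝ) < Real.pi := Real.pi_pos
  have h4t : (0:ℝ) < 1 + 4*t^2 := by positivity
  have h14 : (0:ℝ) < 1/4 + t^2 := by positivity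
  have e1 : Real.log (Real.pi/4) = Real.log Real.pi - Real.log 4 := by
    rw [Real.log_div hpi.ne' (by norm_num)]
  have e2 : Real.log (Real.cosh (Real.pi*t)/(1+4*t^2))
      = Real.log (Real.cosh (Real.pi*t)) - Real.log (1+4*t^2) :=
    Real.log_div hcosh.ne' h4t.ne'
  have e3 : Real.log (Real.pi/Real.cosh (Real.pi*t))
      = Real.log Real.pi - Real.log (Real.cosh (Real.pi*t)) :=
    Real.log_div hpi.ne' hcosh.ne'
  have e4 : Real.log (1/4 + t^2) = Real.log (1+4*t^2) - Real.log 4 := by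
    rw [show (1/4 + t^2 : ℝ) = (1+4*t^2)/4 by ring, Real.log_div h4t.ne' (by norm_num)]
  rw [e1, e2, e3, e4]
  ring
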